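/- Let λ ≥ 0 and let ρ be a compactly supported probability measure on [0, ∞) with mean x̄ = ∫ x dρ > 0. Then the mean of the updated measure A(ρ) satisfies ∫ x dA(ρ) = x̄ + g(λ)·(∫ x² dρ − x̄²)/x̄; in particular ∫ x dA(ρ) ≥ x̄, i.e. the mean molecular fitness never decreases under one round of compartmentalized selection. -/

import Mathlib

open MeasureTheory Filter

/-- The retardation factor `g(λ) = (1 - e^{-λ})/λ` (with the convention `g(0) = 1`). -/
noncomputable def gFactor (l : ℝ) : ℝ := if l = 0 then 1 else (1 - Real.exp (-l)) / l

/-- The selection update operator: `A(ρ)` is the measure with density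
`x ↦ 1 - g(λ) + g(λ)·x/x̄` with respect to `ρ`, where `x̄ = ∫ x dρ`. -/
noncomputable def updateA (l : ℝ) (ρ : Measure ℝ) : Measure ℝ :=
  ρ.withDensity (fun x =>
    ENNReal.ofReal (1 - gFactor l + gFactor l * x / ∫ y, y ∂ρ))

lemma gFactor_nonneg {l : ℝ} (hl : 0 ≤ l) : 0 ≤ gFactor l := by
  unfold gFactor
  split_ifs with h
  · norm_num
  · have hl' : 0 < l := lt_of_le_of_ne hl (Ne.symm h)
    have : Real.exp (-l) ≤ 1 := Real.exp_le_one_iff.mpr (by linarith)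
    exact div_nonneg (by linarith) hl'.le

lemma gFactor_le_one {l : ℝ} (hl : 0 ≤ l) : gFactor l ≤ 1 := by
  unfold gFactor
  split_ifs with h
  · norm_num
  · have hl' : 0 < l := lt_of_le_of_ne hl (Ne.symm h)
    have := Real.add_one_le_exp (-l)
    exact (div_le_one hl').mpr (by linarith)

theorem mean_fitness_never_decreases
    (l : ℝ) (hl : 0 ≤ l)
    (ρ : Measure ℝ) (hρ : IsProbabilityMeasure ρ)
    (K : Set ℝ) (hK : IsCompact K) (hsupp : ρ Kᶜ = 0)
    (hpos : ρ (Set.Iio 0) = 0)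
    (hmean : 0 < ∫ x, x ∂ρ) :
    (∫ x, x ∂(updateA l ρ)) = (∫ x, x ∂ρ) +
      gFactor l * ((∫ x, x ^ 2 ∂ρ) - (∫ x, x ∂ρ) ^ 2) / (∫ x, x ∂ρ) ∧
    (∫ x, x ∂ρ) ≤ ∫ x, x ∂(updateA l ρ) := by
  have hg0 := gFactor_nonneg hl
  have hg1 := gFactor_le_one hl
  set m := ∫ x, x ∂ρ with hmdef
  have hm : 0 < m := hmean
  -- a.e. facts
  have hKae : ∀ᵐ x ∂ρ, x ∈ K := by
    rw [ae_iff]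
    exact hsupp
  have hx0 : ∀ᵐ x ∂ρ, 0 ≤ x := by
    rw [ae_iff]
    have : {x : ℝ | ¬ 0 ≤ x} = Set.Iio 0 := by ext x; simp [not_le]
    rw [this]; exact hpos
  -- boundedness
  obtain ⟨C, hC⟩ := isBounded_iff_forall_norm_le.mp hK.isBounded
  -- integrability
  have hint1 : Integrable (fun x : ℝ => x) ρ := by
    refine ⟨measurable_id.aestronglyMeasurable, ?_⟩
    apply HasFiniteIntegral.of_bounded (C := C)
    filter_upwards [hKae] with x hx using hC x hx
  have hint2 : Integrable (fun x : ℝ => x ^ 2) ρ := by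
    refine ⟨(measurable_id.pow_const 2).aestronglyMeasurable, ?_⟩
    apply HasFiniteIntegral.of_bounded (C := C ^ 2)
    filter_upwards [hKae] with x hx
    have : ‖x‖ ≤ C := hC x hx
    calc ‖x ^ 2‖ = ‖x‖ ^ 2 := by rw [norm_pow]
    _ ≤ C ^ 2 := pow_le_pow_left₀ (norm_nonneg x) this 2
  -- the density function
  set φ : ℝ → ℝ := fun x => 1 - gFactor l + gFactor l * x / m with hφdef
  have hφmeas : Measurable φ := by
    apply Measurable.add measurable_const
    exact (measurable_id.const_mul _).div_const _
  have hφ0 : ∀ᵐ x ∂ρ, 0 ≤ φ x := by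
    filter_upwards [hx0] with x hx
    have : 0 ≤ gFactor l * x / m := div_nonneg (mul_nonneg hg0 hx) hm.le
    simp only [hφdef]
    linarith
  -- mean of updated measure
  have hupdate : updateA l ρ = ρ.withDensity (fun x => ((φ x).toNNReal : ENNReal)) := by
    unfold updateA
    rfl
  have hmean_eq : (∫ x, x ∂(updateA l ρ)) = ∫ x, φ x * x ∂ρ := by
    rw [hupdate, integral_withDensity_eq_integral_smul (hφmeas.real_toNNReal)]
    apply integral_congr_ae
    filter_upwards [hφ0] with x hx
    simp [NNReal.smul_def, Real.coe_toNNReal _ hx]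
  set S := ∫ x, x ^ 2 ∂ρ with hSdef
  have key : ∫ x, φ x * x ∂ρ = (1 - gFactor l) * m + (gFactor l / m) * S := by
    have heq : ∀ x : ℝ, φ x * x = (1 - gFactor l) * x + (gFactor l / m) * x ^ 2 := by
      intro x; simp only [hφdef]; ring
    simp_rw [heq]
    rw [integral_add (hint1.const_mul _) (hint2.const_mul _), integral_const_mul,
      integral_const_mul, ← hmdef, ← hSdef]
  -- variance nonneg
  have hvar : m ^ 2 ≤ S := by
    have h0 : 0 ≤ ∫ x, (x - m) ^ 2 ∂ρ := integral_nonneg fun x => sq_nonneg _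
    have hexp : ∫ x, (x - m) ^ 2 ∂ρ = S - 2 * m * m + m ^ 2 := by
      have heq : ∀ x : ℝ, (x - m) ^ 2 = (x ^ 2 - (2 * m) * x) + m ^ 2 := by
        intro x; ring
      simp_rw [heq]
      have i1 : Integrable (fun x : ℝ => x ^ 2 - 2 * m * x) ρ := by
        exact hint2.sub (hint1.const_mul _)
      rw [integral_add i1 (integrable_const _),
        integral_sub hint2 (hint1.const_mul _), integral_const_mul, integral_const]
      simp [← hmdef, ← hSdef]
    nlinarith [h0, hexp]
  have hfinal : (∫ x, x ∂(updateA l ρ)) = m + gFactor l * (S - m ^ 2) / m := by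
    rw [hmean_eq, key]
    field_simp
    ring
  refine ⟨hfinal, ?_⟩
  rw [hfinal]
  have : 0 ≤ gFactor l * (S - m ^ 2) / m :=
    div_nonneg (mul_nonneg hg0 (by linarith)) hm.le
  linarith
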